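/- For n ≥ r ≥ 0, let C be the square matrix over ℚ indexed by W(n,r) whose (w,v) entry is c(w,v) = #{ σ ∈ S_n : λ_{M_v}(σ) = w }. Then c(w,v) ≠ 0 if and only if w ≤ v in W(n,r), and the matrix C is invertible. -/

import Mathlib

open Matroid Set

/-- The rank of a set `X` in a matroid `M`: the largest cardinality of an independent
subset of `X`. -/
noncomputable def matRk {α : Type*} (M : Matroid α) (X : Set α) : ℕ :=
  sSup {k : ℕ | ∃ I : Set α, I ⊆ X ∧ M.Indep I ∧ I.ncard = k}

/-- The set of positions of the ones of a 0-1 word of length `n`. -/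
def ones {n : ℕ} (v : Fin n → Bool) : Finset (Fin n) :=
  Finset.univ.filter (fun i => v i = true)

/-- The order on `W(n,r)`: `v ≤ w` iff `π_k(v) ≤ π_k(w)` for all `k`, where `π_k`
is the position of the `k`-th one. -/
def wordLE {n : ℕ} (v w : Fin n → Bool) : Prop :=
  (ones v).card = (ones w).card ∧
  ∀ (k : ℕ) (hv : k < (ones v).card) (hw : k < (ones w).card),
    (ones v).orderEmbOfFin rfl ⟨k, hv⟩ ≤ (ones w).orderEmbOfFin rfl ⟨k, hw⟩

/-- The flag on `Fin n` determined by a word `w` with `r` ones: `T_r` is everything,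
and `T_{k-1} = { s : s < e_{π_k(w)} }` for `1 ≤ k ≤ r`. -/
def flagOfWord {n : ℕ} (w : Fin n → Bool) (i : ℕ) : Set (Fin n) :=
  if h : i < (ones w).card
    then {s : Fin n | s < (ones w).orderEmbOfFin rfl ⟨i, h⟩} else Set.univ

/-- `λ_M(σ) = w_{M(S_σ)}`: the word of a matroid `M` on `Fin n` relative to the
reordering `σ(e_1) < ⋯ < σ(e_n)` of the ground set. -/
noncomputable def lam {n : ℕ} (M : Matroid (Fin n)) (σ : Equiv.Perm (Fin n)) :
    Fin n → Bool :=
  fun i => decide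
    (matRk M (⇑σ '' {j : Fin n | j < i}) < matRk M (⇑σ '' {j : Fin n | j ≤ i}))

namespace FreedomAux

variable {n : ℕ}

/-! ### counting lemmas for finsets in `Fin n` -/

lemma card_filter_val_lt (i : ℕ) (hi : i ≤ n) :
    (Finset.univ.filter (fun j : Fin n => (j : ℕ) < i)).card = i := by
  rcases Nat.lt_or_ge i n with h | h
  · have he : (Finset.univ.filter (fun j : Fin n => (j : ℕ) < i)) = Finset.Iio ⟨i, h⟩ := by
      ext j; simp [Fin.lt_def]
    rw [he, Fin.card_Iio]
  · have he : (Finset.univ.filter (fun j : Fin n => (j : ℕ) < i)) = Finset.univ := by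
      ext j; simpa using lt_of_lt_of_le j.is_lt h
    rw [he, Finset.card_univ, Fintype.card_fin]
    omega

lemma mem_orderEmb_range {S : Finset (Fin n)} {x : Fin n} (hx : x ∈ S) :
    ∃ j : Fin S.card, S.orderEmbOfFin rfl j = x := by
  have h := Finset.range_orderEmbOfFin S rfl
  have hx' : x ∈ Set.range (S.orderEmbOfFin rfl) := by rw [h]; exact hx
  exact hx'

lemma image_lt_subset (S : Finset (Fin n)) (t : Fin S.card) (i : ℕ)
    (hi : ((S.orderEmbOfFin rfl t : Fin n) : ℕ) < i ∨ i = ((S.orderEmbOfFin rfl t : Fin n) : ℕ)) :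
    Finset.image (S.orderEmbOfFin rfl)
      (Finset.univ.filter (fun j : Fin S.card => (j : ℕ) < (t : ℕ)))
      ⊆ S.filter (fun x : Fin n => (x : ℕ) < i) := by
  intro x hx
  simp only [Finset.mem_image, Finset.mem_filter, Finset.mem_univ, true_and] at hx ⊢
  obtain ⟨j, hj, rfl⟩ := hx
  refine ⟨Finset.orderEmbOfFin_mem _ _ _, ?_⟩
  have hlt : S.orderEmbOfFin rfl j < S.orderEmbOfFin rfl t :=
    (S.orderEmbOfFin rfl).strictMono (by rwa [Fin.lt_def])
  rw [Fin.lt_def] at hlt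
  omega

/-- `(e t).val < i` iff `t < #{x ∈ S : x.val < i}`, for `e` the enumeration of `S`. -/
lemma orderEmb_lt_iff (S : Finset (Fin n)) (t : Fin S.card) (i : ℕ) :
    ((S.orderEmbOfFin rfl t : Fin n) : ℕ) < i ↔
      (t : ℕ) < (S.filter (fun x : Fin n => (x : ℕ) < i)).card := by
  constructor
  · intro h
    have hsub : Finset.image (S.orderEmbOfFin rfl)
        (Finset.univ.filter (fun j : Fin S.card => (j : ℕ) < (t : ℕ) + 1))
        ⊆ S.filter (fun x : Fin n => (x : ℕ) < i) := by
      intro x hx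
      simp only [Finset.mem_image, Finset.mem_filter, Finset.mem_univ, true_and] at hx ⊢
      obtain ⟨j, hj, rfl⟩ := hx
      refine ⟨Finset.orderEmbOfFin_mem _ _ _, ?_⟩
      have hle : S.orderEmbOfFin rfl j ≤ S.orderEmbOfFin rfl t :=
        (S.orderEmbOfFin rfl).monotone (by rw [Fin.le_def]; omega)
      rw [Fin.le_def] at hle
      omega
    have hcard := Finset.card_le_card hsub
    rw [Finset.card_image_of_injective _ (S.orderEmbOfFin rfl).injective,
      card_filter_val_lt ((t : ℕ) + 1) t.is_lt] at hcard
    omega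
  · intro h
    by_contra hcon
    push_neg at hcon
    have hsub : S.filter (fun x : Fin n => (x : ℕ) < i) ⊆ Finset.image (S.orderEmbOfFin rfl)
        (Finset.univ.filter (fun j : Fin S.card => (j : ℕ) < (t : ℕ))) := by
      intro x hx
      simp only [Finset.mem_filter] at hx
      obtain ⟨j, rfl⟩ := mem_orderEmb_range hx.1
      simp only [Finset.mem_image]
      refine ⟨j, ?_, rfl⟩
      simp only [Finset.mem_filter, Finset.mem_univ, true_and]
      have hlt : S.orderEmbOfFin rfl j < S.orderEmbOfFin rfl t := by
        rw [Fin.lt_def]; omega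
      have : j < t := (S.orderEmbOfFin rfl).lt_iff_lt.mp hlt
      rwa [Fin.lt_def] at this
    have hcard := Finset.card_le_card hsub
    rw [Finset.card_image_of_injective _ (S.orderEmbOfFin rfl).injective,
      card_filter_val_lt ((t : ℕ)) (le_of_lt t.is_lt)] at hcard
    omega

lemma card_filter_lt_orderEmb (S : Finset (Fin n)) (t : Fin S.card) :
    (S.filter (fun x : Fin n => (x : ℕ) < ((S.orderEmbOfFin rfl t : Fin n) : ℕ))).card = (t : ℕ) := by
  have h1 : ¬ ((t : ℕ) < (S.filter (fun x : Fin n => (x : ℕ) <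
      ((S.orderEmbOfFin rfl t : Fin n) : ℕ))).card) := by
    rw [← orderEmb_lt_iff]; omega
  have h2 := Finset.card_le_card (image_lt_subset S t _ (Or.inr rfl))
  rw [Finset.card_image_of_injective _ (S.orderEmbOfFin rfl).injective,
    card_filter_val_lt ((t : ℕ)) (le_of_lt t.is_lt)] at h2
  omega

lemma filter_card_le (S : Finset (Fin n)) (i : ℕ) (hi : i ≤ n) :
    (S.filter (fun x : Fin n => (x : ℕ) < i)).card ≤ i := by
  calc (S.filter (fun x : Fin n => (x : ℕ) < i)).card
      ≤ (Finset.univ.filter (fun x : Fin n => (x : ℕ) < i)).card :=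
        Finset.card_le_card (Finset.filter_subset_filter _ (Finset.subset_univ S))
    _ = i := card_filter_val_lt i hi

lemma orderEmb_gap (S : Finset (Fin n)) (j k : ℕ) (hj : j ≤ k) (hk : k < S.card) :
    ((S.orderEmbOfFin rfl ⟨j, lt_of_le_of_lt hj hk⟩ : Fin n) : ℕ) + (k - j)
      ≤ ((S.orderEmbOfFin rfl ⟨k, hk⟩ : Fin n) : ℕ) := by
  induction k with
  | zero =>
      interval_cases j
      simp
  | succ k ih =>
      rcases Nat.lt_or_ge j (k + 1) with h | h
      · have hj' : j ≤ k := by omega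
        have hk' : k < S.card := by omega
        have h1 := ih hj' hk'
        have h2 : S.orderEmbOfFin rfl ⟨k, hk'⟩ < S.orderEmbOfFin rfl ⟨k + 1, hk⟩ :=
          (S.orderEmbOfFin rfl).strictMono (by simp [Fin.lt_def])
        rw [Fin.lt_def] at h2
        omega
      · have : j = k + 1 := by omega
        subst this
        simp

lemma compl_filter_card (S : Finset (Fin n)) (i : ℕ) (hi : i ≤ n) :
    (Sᶜ.filter (fun x : Fin n => (x : ℕ) < i)).card + (S.filter (fun x : Fin n => (x : ℕ) < i)).card = i := by
  classical
  have key := Finset.card_filter_add_card_filter_not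
    (s := Finset.univ.filter (fun x : Fin n => (x : ℕ) < i)) (p := fun x => x ∈ S)
  have h1 : (Finset.univ.filter (fun x : Fin n => (x : ℕ) < i)).filter (fun x => x ∈ S)
      = S.filter (fun x : Fin n => (x : ℕ) < i) := by
    ext x; simp [and_comm]
  have h2 : (Finset.univ.filter (fun x : Fin n => (x : ℕ) < i)).filter (fun x => ¬ x ∈ S)
      = Sᶜ.filter (fun x : Fin n => (x : ℕ) < i) := by
    ext x; simp [and_comm]
  rw [h1, h2, card_filter_val_lt i hi] at key
  omega

/-! ### basic rank lemmas -/

lemma matRk_bddAbove (M : Matroid (Fin n)) (X : Set (Fin n)) :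
    BddAbove {k : ℕ | ∃ I : Set (Fin n), I ⊆ X ∧ M.Indep I ∧ I.ncard = k} := by
  refine ⟨n, ?_⟩
  rintro k ⟨I, -, -, rfl⟩
  have := Set.ncard_le_ncard (Set.subset_univ I) Set.finite_univ
  simpa [Set.ncard_univ, Nat.card_eq_fintype_card] using this

lemma le_matRk (M : Matroid (Fin n)) {I X : Set (Fin n)} (hI : M.Indep I) (hIX : I ⊆ X) :
    I.ncard ≤ matRk M X :=
  le_csSup (matRk_bddAbove M X) ⟨I, hIX, hI, rfl⟩

lemma matRk_exists (M : Matroid (Fin n)) (hempty : M.Indep ∅) (X : Set (Fin n)) :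
    ∃ I : Set (Fin n), I ⊆ X ∧ M.Indep I ∧ I.ncard = matRk M X := by
  have h := Nat.sSup_mem (s := {k : ℕ | ∃ I : Set (Fin n), I ⊆ X ∧ M.Indep I ∧ I.ncard = k})
    ⟨0, ∅, Set.empty_subset X, hempty, by simp⟩ (matRk_bddAbove M X)
  exact h

lemma matRk_le (M : Matroid (Fin n)) (X : Set (Fin n)) (m : ℕ)
    (h : ∀ I : Set (Fin n), I ⊆ X → M.Indep I → I.ncard ≤ m) : matRk M X ≤ m := by
  apply csSup_le
  · exact ⟨0, ∅, Set.empty_subset X, by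
      simpa using (h ∅ (Set.empty_subset X))⟩
  · rintro k ⟨I, hIX, hI, rfl⟩
    exact h I hIX hI

lemma matRk_empty (M : Matroid (Fin n)) (hempty : M.Indep ∅) : matRk M ∅ = 0 := by
  refine Nat.le_zero.1 ?_
  apply matRk_le
  intro I hIX _
  rw [Set.subset_empty_iff] at hIX
  simp [hIX]

lemma matRk_mono (M : Matroid (Fin n)) (hempty : M.Indep ∅) {X Y : Set (Fin n)} (h : X ⊆ Y) :
    matRk M X ≤ matRk M Y := by
  obtain ⟨I, hIX, hI, hcard⟩ := matRk_exists M hempty X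
  rw [← hcard]
  exact le_matRk M hI (hIX.trans h)

lemma matRk_insert_le (M : Matroid (Fin n)) (hempty : M.Indep ∅)
    (hdown : ∀ I J : Set (Fin n), J ⊆ I → M.Indep I → M.Indep J) (x : Fin n) (X : Set (Fin n)) :
    matRk M (insert x X) ≤ matRk M X + 1 := by
  obtain ⟨I, hIX, hI, hcard⟩ := matRk_exists M hempty (insert x X)
  have h1 : I \ {x} ⊆ X := by
    intro y hy
    rcases hIX hy.1 with h | h
    · exact absurd h hy.2
    · exact h
  have h2 : M.Indep (I \ {x}) := hdown I _ Set.diff_subset hI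
  have h3 := le_matRk M h2 h1
  have h4 : I.ncard ≤ (I \ {x}).ncard + 1 := by
    have hsub : I ⊆ insert x (I \ {x}) := by
      intro y hy
      by_cases hyx : y = x
      · simp [hyx]
      · exact Set.mem_insert_of_mem _ ⟨hy, hyx⟩
    calc I.ncard ≤ (insert x (I \ {x})).ncard := Set.ncard_le_ncard hsub (Set.toFinite _)
      _ ≤ (I \ {x}).ncard + 1 := Set.ncard_insert_le _ _
  omega

/-! ### independence lemmas from the freedom description -/

lemma mem_ones {u : Fin n → Bool} {x : Fin n} : x ∈ ones u ↔ u x = true := by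
  simp [ones]

lemma indep_empty (v : Fin n → Bool) (M : Matroid (Fin n))
    (hind : ∀ I : Set (Fin n), M.Indep I ↔
      ∀ i ≤ (ones v).card, (I ∩ flagOfWord v i).ncard ≤ i) : M.Indep ∅ := by
  rw [hind]
  intro i _
  simp

lemma indep_down (v : Fin n → Bool) (M : Matroid (Fin n))
    (hind : ∀ I : Set (Fin n), M.Indep I ↔
      ∀ i ≤ (ones v).card, (I ∩ flagOfWord v i).ncard ≤ i) :
    ∀ I J : Set (Fin n), J ⊆ I → M.Indep I → M.Indep J := by
  intro I J hJI hI
  rw [hind] at hI ⊢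
  intro i hi
  exact le_trans (Set.ncard_le_ncard (Set.inter_subset_inter_left _ hJI) (Set.toFinite _))
    (hI i hi)

lemma flag_eq_lt (v : Fin n → Bool) {j : ℕ} (hj : j < (ones v).card) :
    flagOfWord v j = {s : Fin n | s < (ones v).orderEmbOfFin rfl ⟨j, hj⟩} := dif_pos hj

lemma flag_eq_univ (v : Fin n → Bool) {j : ℕ} (hj : ¬ j < (ones v).card) :
    flagOfWord v j = Set.univ := dif_neg hj

lemma ncard_lt_set (a : Fin n) : {s : Fin n | s < a}.ncard = (a : ℕ) := by
  have h : {s : Fin n | s < a} = ↑(Finset.Iio a) := by ext s; simp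
  rw [h, Set.ncard_coe_finset, Fin.card_Iio]

lemma ncard_prefix (i : ℕ) (hi : i ≤ n) : {j : Fin n | (j : ℕ) < i}.ncard = i := by
  have h : {j : Fin n | (j : ℕ) < i}
      = ↑(Finset.univ.filter (fun j : Fin n => (j : ℕ) < i)) := by ext j; simp
  rw [h, Set.ncard_coe_finset, card_filter_val_lt i hi]

lemma ncard_val_lt_fin (c m : ℕ) (hm : m ≤ c) :
    {t : Fin c | (t : ℕ) < m}.ncard = m := ncard_prefix (n := c) m hm

lemma indep_prefix_ones (v : Fin n → Bool) (M : Matroid (Fin n))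
    (hind : ∀ I : Set (Fin n), M.Indep I ↔
      ∀ i ≤ (ones v).card, (I ∩ flagOfWord v i).ncard ≤ i)
    (m : ℕ) (hm : m ≤ (ones v).card) :
    M.Indep ((fun t => ((ones v).orderEmbOfFin rfl t : Fin n)) ''
        {t : Fin (ones v).card | (t : ℕ) < m}) ∧
      ((fun t => ((ones v).orderEmbOfFin rfl t : Fin n)) ''
        {t : Fin (ones v).card | (t : ℕ) < m}).ncard = m := by
  constructor
  · rw [hind]
    intro i hi
    by_cases hic : i < (ones v).card
    · rw [flag_eq_lt v hic]
      have hsub : ((fun t => ((ones v).orderEmbOfFin rfl t : Fin n)) ''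
          {t : Fin (ones v).card | (t : ℕ) < m}) ∩
            {s : Fin n | s < (ones v).orderEmbOfFin rfl ⟨i, hic⟩}
          ⊆ (fun t => ((ones v).orderEmbOfFin rfl t : Fin n)) ''
            {t : Fin (ones v).card | (t : ℕ) < i} := by
        rintro x ⟨⟨t, _, rfl⟩, hxlt⟩
        refine ⟨t, ?_, rfl⟩
        have : t < (⟨i, hic⟩ : Fin (ones v).card) :=
          ((ones v).orderEmbOfFin rfl).lt_iff_lt.mp hxlt
        exact this
      calc _ ≤ ((fun t => ((ones v).orderEmbOfFin rfl t : Fin n)) ''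
            {t : Fin (ones v).card | (t : ℕ) < i}).ncard :=
            Set.ncard_le_ncard hsub (Set.toFinite _)
        _ = i := by
            rw [Set.ncard_image_of_injective _ ((ones v).orderEmbOfFin rfl).injective,
              ncard_val_lt_fin _ i hi]
    · rw [flag_eq_univ v hic, Set.inter_univ,
        Set.ncard_image_of_injective _ ((ones v).orderEmbOfFin rfl).injective,
        ncard_val_lt_fin _ m hm]
      omega
  · rw [Set.ncard_image_of_injective _ ((ones v).orderEmbOfFin rfl).injective,
      ncard_val_lt_fin _ m hm]

/-! ### the word of a matroid, and rank telescoping -/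

def cnt (u : Fin n → Bool) (i : ℕ) : ℕ :=
  ((ones u).filter (fun x : Fin n => (x : ℕ) < i)).card

lemma cnt_zero (u : Fin n → Bool) : cnt u 0 = 0 := by
  simp [cnt]

lemma cnt_succ (u : Fin n → Bool) (i : ℕ) (hi : i < n) :
    cnt u (i + 1) = cnt u i + (if u ⟨i, hi⟩ = true then 1 else 0) := by
  classical
  have hsplit : (ones u).filter (fun x : Fin n => (x : ℕ) < i + 1)
      = ((ones u).filter (fun x : Fin n => (x : ℕ) < i))
        ∪ ((ones u).filter (fun x : Fin n => (x : ℕ) = i)) := by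
    ext x
    simp only [Finset.mem_union, Finset.mem_filter]
    constructor
    · rintro ⟨h1, h2⟩
      rcases Nat.lt_succ_iff_lt_or_eq.1 h2 with h | h
      · exact Or.inl ⟨h1, h⟩
      · exact Or.inr ⟨h1, h⟩
    · rintro (⟨h1, h2⟩ | ⟨h1, h2⟩)
      · exact ⟨h1, by omega⟩
      · exact ⟨h1, by omega⟩
  have hdisj : Disjoint ((ones u).filter (fun x : Fin n => (x : ℕ) < i))
      ((ones u).filter (fun x : Fin n => (x : ℕ) = i)) := by
    rw [Finset.disjoint_left]
    intro x hx hx'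
    simp only [Finset.mem_filter] at hx hx'
    omega
  rw [cnt, hsplit, Finset.card_union_of_disjoint hdisj]
  congr 1
  by_cases hu : u ⟨i, hi⟩ = true
  · rw [if_pos hu]
    have he : (ones u).filter (fun x : Fin n => (x : ℕ) = i) = {⟨i, hi⟩} := by
      ext x
      simp only [Finset.mem_filter, Finset.mem_singleton]
      constructor
      · rintro ⟨_, h2⟩
        exact Fin.ext h2
      · rintro rfl
        exact ⟨mem_ones.2 hu, rfl⟩
    rw [he, Finset.card_singleton]
  · rw [if_neg hu]
    have he : (ones u).filter (fun x : Fin n => (x : ℕ) = i) = ∅ := by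
      ext x
      simp only [Finset.mem_filter, Finset.notMem_empty, iff_false, not_and]
      intro hx hxi
      have hxeq : x = (⟨i, hi⟩ : Fin n) := Fin.ext hxi
      exact hu (hxeq ▸ mem_ones.1 hx)
    rw [he, Finset.card_empty]

lemma cnt_le_card (u : Fin n → Bool) (i : ℕ) : cnt u i ≤ (ones u).card :=
  Finset.card_filter_le _ _

lemma lam_iff (M : Matroid (Fin n)) (σ : Equiv.Perm (Fin n)) (i : Fin n) :
    lam M σ i = true ↔
      matRk M (⇑σ '' {j : Fin n | (j : ℕ) < (i : ℕ)})
        < matRk M (⇑σ '' {j : Fin n | (j : ℕ) < (i : ℕ) + 1}) := by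
  have h1 : {j : Fin n | j < i} = {j : Fin n | (j : ℕ) < (i : ℕ)} := rfl
  have h2 : {j : Fin n | j ≤ i} = {j : Fin n | (j : ℕ) < (i : ℕ) + 1} := by
    ext j
    simp only [Set.mem_setOf_eq, Fin.le_def, Nat.lt_succ_iff]
  rw [lam, h1, h2, decide_eq_true_eq]

lemma rank_prefix (M : Matroid (Fin n)) (hempty : M.Indep ∅)
    (hdown : ∀ I J : Set (Fin n), J ⊆ I → M.Indep I → M.Indep J)
    (σ : Equiv.Perm (Fin n)) :
    ∀ i ≤ n, matRk M (⇑σ '' {j : Fin n | (j : ℕ) < i}) = cnt (lam M σ) i := by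
  intro i
  induction i with
  | zero =>
      intro _
      have h0 : {j : Fin n | (j : ℕ) < 0} = (∅ : Set (Fin n)) := by ext j; simp
      rw [h0, Set.image_empty, matRk_empty M hempty, cnt_zero]
  | succ i ih =>
      intro hi1
      have hi : i < n := hi1
      have hA := ih (le_of_lt hi)
      have hinsert : {j : Fin n | (j : ℕ) < i + 1}
          = insert (⟨i, hi⟩ : Fin n) {j : Fin n | (j : ℕ) < i} := by
        ext j
        simp only [Set.mem_setOf_eq, Set.mem_insert_iff, Fin.ext_iff]
        omega
      have himg : ⇑σ '' {j : Fin n | (j : ℕ) < i + 1}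
          = insert (σ ⟨i, hi⟩) (⇑σ '' {j : Fin n | (j : ℕ) < i}) := by
        rw [hinsert, Set.image_insert_eq]
      have hle : matRk M (⇑σ '' {j : Fin n | (j : ℕ) < i})
          ≤ matRk M (⇑σ '' {j : Fin n | (j : ℕ) < i + 1}) :=
        matRk_mono M hempty (Set.image_mono (fun j hj => by
          simp only [Set.mem_setOf_eq] at hj ⊢; omega))
      have hle2 : matRk M (⇑σ '' {j : Fin n | (j : ℕ) < i + 1})
          ≤ matRk M (⇑σ '' {j : Fin n | (j : ℕ) < i}) + 1 := by
        rw [himg]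
        exact matRk_insert_le M hempty hdown _ _
      rw [cnt_succ _ i hi]
      by_cases hl : lam M σ ⟨i, hi⟩ = true
      · rw [if_pos hl]
        have hj := (lam_iff M σ ⟨i, hi⟩).1 hl
        simp only [Fin.val_mk] at hj
        omega
      · rw [if_neg hl]
        have hnot : ¬ (matRk M (⇑σ '' {j : Fin n | (j : ℕ) < i})
            < matRk M (⇑σ '' {j : Fin n | (j : ℕ) < i + 1})) := by
          intro hc
          exact hl ((lam_iff M σ ⟨i, hi⟩).2 (by simpa using hc))
        omega

/-! ### top-m subsets -/

lemma exists_top_subset (X : Set (Fin n)) (m : ℕ) (hm : m ≤ X.ncard) :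
    ∃ I : Set (Fin n), I ⊆ X ∧ I.ncard = m ∧ ∀ y ∈ X \ I, ∀ x ∈ I, y < x := by
  classical
  have hXF : X = ↑(X.toFinite.toFinset) := (Set.Finite.coe_toFinset _).symm
  set F : Finset (Fin n) := X.toFinite.toFinset with hF
  have hcard : X.ncard = F.card := by rw [hXF, Set.ncard_coe_finset]
  refine ⟨(fun t => (F.orderEmbOfFin rfl t : Fin n)) '' {t : Fin F.card | F.card - m ≤ (t : ℕ)},
    ?_, ?_, ?_⟩
  · rintro x ⟨t, _, rfl⟩
    rw [hXF]
    exact Finset.orderEmbOfFin_mem _ _ _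
  · rw [Set.ncard_image_of_injective _ (F.orderEmbOfFin rfl).injective]
    have hset : {t : Fin F.card | F.card - m ≤ (t : ℕ)}
        = ↑(Finset.univ.filter (fun t : Fin F.card => ¬ ((t : ℕ) < F.card - m))) := by
      ext t
      simp only [Set.mem_setOf_eq, Finset.coe_filter, Finset.mem_univ, true_and,
        Set.mem_setOf_eq]
      omega
    rw [hset, Set.ncard_coe_finset]
    have hpc := Finset.card_filter_add_card_filter_not
      (s := (Finset.univ : Finset (Fin F.card)))
      (p := fun t : Fin F.card => (t : ℕ) < F.card - m)
    rw [card_filter_val_lt (n := F.card) (F.card - m) (by omega)] at hpc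
    rw [Finset.card_univ, Fintype.card_fin] at hpc
    omega
  · rintro y ⟨hyX, hyI⟩ x ⟨t, ht, rfl⟩
    rw [hXF] at hyX
    obtain ⟨s, rfl⟩ := mem_orderEmb_range hyX
    have hs : ¬ (F.card - m ≤ (s : ℕ)) := fun hc => hyI ⟨s, hc, rfl⟩
    have ht' : F.card - m ≤ (t : ℕ) := ht
    exact (F.orderEmbOfFin rfl).strictMono (show s < t by rw [Fin.lt_def]; omega)

/-! ### forward direction -/

lemma lam_forward (v w : Fin n → Bool) (M : Matroid (Fin n))
    (hind : ∀ I : Set (Fin n), M.Indep I ↔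
      ∀ i ≤ (ones v).card, (I ∩ flagOfWord v i).ncard ≤ i)
    (σ : Equiv.Perm (Fin n)) (hlam : lam M σ = w)
    (k : ℕ) (hkw : k < (ones w).card) (hkv : k < (ones v).card) :
    (ones w).orderEmbOfFin rfl ⟨k, hkw⟩ ≤ (ones v).orderEmbOfFin rfl ⟨k, hkv⟩ := by
  by_contra hcon
  push_neg at hcon
  rw [Fin.lt_def] at hcon
  set qk : Fin n := (ones w).orderEmbOfFin rfl ⟨k, hkw⟩ with hqk
  set pk : Fin n := (ones v).orderEmbOfFin rfl ⟨k, hkv⟩ with hpk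
  set P : Set (Fin n) := ⇑σ '' {j : Fin n | (j : ℕ) < (qk : ℕ)} with hP
  have hempty := indep_empty v M hind
  have hdown := indep_down v M hind
  have hrk : matRk M P = k := by
    rw [hP, rank_prefix M hempty hdown σ (qk : ℕ) (le_of_lt qk.is_lt), hlam]
    exact card_filter_lt_orderEmb (ones w) ⟨k, hkw⟩
  have hPcard : P.ncard = (qk : ℕ) := by
    rw [hP, Set.ncard_image_of_injective _ σ.injective, ncard_prefix _ (le_of_lt qk.is_lt)]
  have hk_le : k ≤ (pk : ℕ) := by
    rw [hpk]
    have h1 := card_filter_lt_orderEmb (ones v) ⟨k, hkv⟩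
    simp only [Fin.val_mk] at h1
    have h2 := filter_card_le (ones v)
      ((((ones v).orderEmbOfFin rfl) ⟨k, hkv⟩ : Fin n) : ℕ) (le_of_lt (Fin.is_lt _))
    omega
  have hm : k + 1 ≤ P.ncard := by omega
  obtain ⟨I, hIP, hIcard, hsep⟩ := exists_top_subset P (k + 1) hm
  have hIindep : M.Indep I := by
    rw [hind]
    intro j hj
    by_cases hjc : j < (ones v).card
    · rw [flag_eq_lt v hjc]
      set pj : Fin n := (ones v).orderEmbOfFin rfl ⟨j, hjc⟩ with hpj
      by_contra hcon2
      push_neg at hcon2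
      have hne : (I ∩ {s : Fin n | s < pj}).Nonempty :=
        Set.nonempty_of_ncard_ne_zero (by omega)
      obtain ⟨x0, hx0I, hx0lt⟩ := hne
      have hPsub : P \ {s : Fin n | s < pj} ⊆ I := by
        intro y hy
        by_contra hyI
        have h1 : y < x0 := hsep y ⟨hy.1, hyI⟩ x0 hx0I
        exact hy.2 (lt_trans h1 hx0lt)
      have h5 : (P \ {s : Fin n | s < pj}).ncard ≤ (I \ {s : Fin n | s < pj}).ncard :=
        Set.ncard_le_ncard (fun y hy => ⟨hPsub hy, hy.2⟩) (Set.toFinite _)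
      have h6 := Set.ncard_inter_add_ncard_diff_eq_ncard I {s : Fin n | s < pj}
        (Set.toFinite _)
      have h7 := Set.ncard_inter_add_ncard_diff_eq_ncard P {s : Fin n | s < pj}
        (Set.toFinite _)
      have h8 : (P ∩ {s : Fin n | s < pj}).ncard ≤ (pj : ℕ) :=
        le_trans (Set.ncard_le_ncard Set.inter_subset_right (Set.toFinite _))
          (le_of_eq (ncard_lt_set pj))
      have hjk : j ≤ k := by
        have h10 : (I ∩ {s : Fin n | s < pj}).ncard ≤ I.ncard :=
          Set.ncard_le_ncard Set.inter_subset_left (Set.toFinite _)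
        omega
      have h9 := orderEmb_gap (ones v) j k hjk hkv
      rw [← hpk] at h9
      have h11 : ((ones v).orderEmbOfFin rfl ⟨j, lt_of_le_of_lt hjk hkv⟩ : Fin n) = pj := by
        rw [hpj]
      rw [h11] at h9
      omega
    · rw [flag_eq_univ v hjc, Set.inter_univ, hIcard]
      omega
  have hfin := le_matRk M hIindep hIP
  omega

/-! ### backward direction: constructing a permutation -/

lemma lam_backward (v w : Fin n → Bool) (M : Matroid (Fin n))
    (hind : ∀ I : Set (Fin n), M.Indep I ↔
      ∀ i ≤ (ones v).card, (I ∩ flagOfWord v i).ncard ≤ i)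
    (hcard : (ones w).card = (ones v).card)
    (hle : ∀ (k : ℕ) (hw : k < (ones w).card) (hv : k < (ones v).card),
      (ones w).orderEmbOfFin rfl ⟨k, hw⟩ ≤ (ones v).orderEmbOfFin rfl ⟨k, hv⟩) :
    ∃ σ : Equiv.Perm (Fin n), lam M σ = w := by
  classical
  have hcc : (ones w)ᶜ.card = (ones v)ᶜ.card := by
    simp [Finset.card_compl, hcard]
  set f : Fin n → Fin n := fun x =>
    if hx : x ∈ ones w then
      (ones v).orderEmbOfFin rfl (Fin.cast hcard (((ones w).orderIsoOfFin rfl).symm ⟨x, hx⟩))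
    else
      (ones v)ᶜ.orderEmbOfFin rfl (Fin.cast hcc (((ones w)ᶜ.orderIsoOfFin rfl).symm
        ⟨x, Finset.mem_compl.2 hx⟩)) with hf
  have hfA : ∀ t : Fin (ones w).card,
      f ((ones w).orderEmbOfFin rfl t) = (ones v).orderEmbOfFin rfl (Fin.cast hcard t) := by
    intro t
    have hmem : ((ones w).orderEmbOfFin rfl t : Fin n) ∈ ones w :=
      Finset.orderEmbOfFin_mem _ _ _
    rw [hf]
    dsimp only
    rw [dif_pos hmem]
    have hiso : ((ones w).orderIsoOfFin rfl) t = ⟨(ones w).orderEmbOfFin rfl t, hmem⟩ :=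
      Subtype.ext (Finset.coe_orderIsoOfFin_apply _ _ _)
    rw [← hiso, OrderIso.symm_apply_apply]
  have hfC : ∀ t : Fin (ones w)ᶜ.card,
      f ((ones w)ᶜ.orderEmbOfFin rfl t) = (ones v)ᶜ.orderEmbOfFin rfl (Fin.cast hcc t) := by
    intro t
    have hmem : ((ones w)ᶜ.orderEmbOfFin rfl t : Fin n) ∈ (ones w)ᶜ :=
      Finset.orderEmbOfFin_mem _ _ _
    have hmem' : ¬ ((ones w)ᶜ.orderEmbOfFin rfl t : Fin n) ∈ ones w := Finset.mem_compl.1 hmem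
    rw [hf]
    dsimp only
    rw [dif_neg hmem']
    have hiso : ((ones w)ᶜ.orderIsoOfFin rfl) t = ⟨(ones w)ᶜ.orderEmbOfFin rfl t, hmem⟩ :=
      Subtype.ext (Finset.coe_orderIsoOfFin_apply _ _ _)
    rw [← hiso, OrderIso.symm_apply_apply]
  have hinj : Function.Injective f := by
    intro x y hxy
    by_cases hx : x ∈ ones w <;> by_cases hy : y ∈ ones w
    · rw [hf] at hxy
      dsimp only at hxy
      rw [dif_pos hx, dif_pos hy] at hxy
      have h1 := ((ones v).orderEmbOfFin rfl).injective hxy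
      have h2 : (((ones w).orderIsoOfFin rfl).symm ⟨x, hx⟩ : Fin (ones w).card)
          = ((ones w).orderIsoOfFin rfl).symm ⟨y, hy⟩ := by
        apply Fin.ext
        have := congrArg Fin.val h1
        simpa using this
      have h3 := congrArg (fun z => (((ones w).orderIsoOfFin rfl) z : Fin n)) h2
      simpa using h3
    · exfalso
      rw [hf] at hxy
      dsimp only at hxy
      rw [dif_pos hx, dif_neg hy] at hxy
      have hmem1 : ((ones v).orderEmbOfFin rfl
          (Fin.cast hcard (((ones w).orderIsoOfFin rfl).symm ⟨x, hx⟩)) : Fin n) ∈ ones v :=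
        Finset.orderEmbOfFin_mem _ _ _
      have hmem2 : ((ones v)ᶜ.orderEmbOfFin rfl
          (Fin.cast hcc (((ones w)ᶜ.orderIsoOfFin rfl).symm
            ⟨y, Finset.mem_compl.2 hy⟩)) : Fin n) ∈ (ones v)ᶜ :=
        Finset.orderEmbOfFin_mem _ _ _
      rw [← hxy] at hmem2
      exact (Finset.mem_compl.1 hmem2) hmem1
    · exfalso
      rw [hf] at hxy
      dsimp only at hxy
      rw [dif_neg hx, dif_pos hy] at hxy
      have hmem1 : ((ones v).orderEmbOfFin rfl
          (Fin.cast hcard (((ones w).orderIsoOfFin rfl).symm ⟨y, hy⟩)) : Fin n) ∈ ones v :=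
        Finset.orderEmbOfFin_mem _ _ _
      have hmem2 : ((ones v)ᶜ.orderEmbOfFin rfl
          (Fin.cast hcc (((ones w)ᶜ.orderIsoOfFin rfl).symm
            ⟨x, Finset.mem_compl.2 hx⟩)) : Fin n) ∈ (ones v)ᶜ :=
        Finset.orderEmbOfFin_mem _ _ _
      rw [hxy] at hmem2
      exact (Finset.mem_compl.1 hmem2) hmem1
    · rw [hf] at hxy
      dsimp only at hxy
      rw [dif_neg hx, dif_neg hy] at hxy
      have h1 := ((ones v)ᶜ.orderEmbOfFin rfl).injective hxy
      have h2 : (((ones w)ᶜ.orderIsoOfFin rfl).symm ⟨x, Finset.mem_compl.2 hx⟩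
            : Fin (ones w)ᶜ.card)
          = ((ones w)ᶜ.orderIsoOfFin rfl).symm ⟨y, Finset.mem_compl.2 hy⟩ := by
        apply Fin.ext
        have := congrArg Fin.val h1
        simpa using this
      have h3 := congrArg (fun z => (((ones w)ᶜ.orderIsoOfFin rfl) z : Fin n)) h2
      simpa using h3
  set σ : Equiv.Perm (Fin n) := Equiv.ofBijective f (Finite.injective_iff_bijective.1 hinj)
    with hσ
  have hσap : ∀ x, σ x = f x := fun x => rfl
  have hempty := indep_empty v M hind
  have hdown := indep_down v M hind
  have hrank : ∀ i ≤ n, matRk M (⇑σ '' {j : Fin n | (j : ℕ) < i}) = cnt w i := by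
    intro i hi
    have hmA : cnt w i ≤ (ones w).card := cnt_le_card w i
    have hmB : cnt w i ≤ (ones v).card := hcard ▸ hmA
    obtain ⟨hIind, hIcard⟩ := indep_prefix_ones v M hind (cnt w i) hmB
    apply le_antisymm
    · obtain ⟨J, hJP, hJind, hJcard⟩ := matRk_exists M hempty (⇑σ '' {j : Fin n | (j : ℕ) < i})
      rw [← hJcard]
      rw [hind] at hJind
      by_cases hmc : cnt w i < (ones v).card
      · have hmcw : cnt w i < (ones w).card := by omega
        have hPsub : ⇑σ '' {j : Fin n | (j : ℕ) < i}
            ⊆ {s : Fin n | s < (ones v).orderEmbOfFin rfl ⟨cnt w i, hmc⟩} := by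
          rintro x ⟨j, hj, rfl⟩
          have hj' : (j : ℕ) < i := hj
          show σ j < (ones v).orderEmbOfFin rfl ⟨cnt w i, hmc⟩
          by_cases hjA : j ∈ ones w
          · obtain ⟨t, rfl⟩ := mem_orderEmb_range hjA
            have ht : (t : ℕ) < cnt w i := (orderEmb_lt_iff (ones w) t i).1 hj'
            rw [hσap, hfA]
            apply ((ones v).orderEmbOfFin rfl).strictMono
            rw [Fin.lt_def]
            simpa using ht
          · have hjAc : j ∈ (ones w)ᶜ := Finset.mem_compl.2 hjA
            obtain ⟨t, rfl⟩ := mem_orderEmb_range hjAc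
            rw [hσap, hfC]
            rw [Fin.lt_def]
            apply (orderEmb_lt_iff (ones v)ᶜ (Fin.cast hcc t)
              (((ones v).orderEmbOfFin rfl ⟨cnt w i, hmc⟩ : Fin n) : ℕ)).2
            have hcast : ((Fin.cast hcc t : Fin (ones v)ᶜ.card) : ℕ) = (t : ℕ) := rfl
            rw [hcast]
            have h1 := compl_filter_card (ones v)
              (((ones v).orderEmbOfFin rfl ⟨cnt w i, hmc⟩ : Fin n) : ℕ)
              (le_of_lt (Fin.is_lt _))
            have h2 := card_filter_lt_orderEmb (ones v) ⟨cnt w i, hmc⟩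
            simp only [Fin.val_mk] at h2
            have h3 := card_filter_lt_orderEmb (ones w)ᶜ t
            have h4 := compl_filter_card (ones w)
              ((((ones w)ᶜ.orderEmbOfFin rfl t) : Fin n) : ℕ) (le_of_lt (Fin.is_lt _))
            have ha_le : ((ones w).filter (fun x : Fin n =>
                (x : ℕ) < (((ones w)ᶜ.orderEmbOfFin rfl t : Fin n) : ℕ))).card ≤ cnt w i := by
              apply Finset.card_le_card
              intro x hx
              simp only [Finset.mem_filter] at hx ⊢
              refine ⟨hx.1, ?_⟩
              have := hx.2
              omega
            have haA : ((ones w).filter (fun x : Fin n =>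
                (x : ℕ) < (((ones w)ᶜ.orderEmbOfFin rfl t : Fin n) : ℕ))).card
                < (ones w).card := by omega
            have hqa : (((ones w)ᶜ.orderEmbOfFin rfl t : Fin n) : ℕ) + 1 ≤
                (((ones w).orderEmbOfFin rfl ⟨_, haA⟩ : Fin n) : ℕ) := by
              have hnlt : ¬ ((((ones w).orderEmbOfFin rfl ⟨_, haA⟩ : Fin n) : ℕ)
                  < (((ones w)ᶜ.orderEmbOfFin rfl t : Fin n) : ℕ)) := by
                rw [orderEmb_lt_iff]
                simp
              have hne : (((ones w).orderEmbOfFin rfl ⟨_, haA⟩ : Fin n) : ℕ)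
                  ≠ (((ones w)ᶜ.orderEmbOfFin rfl t : Fin n) : ℕ) := by
                intro hcontra
                have hmem1 : ((ones w).orderEmbOfFin rfl ⟨_, haA⟩ : Fin n) ∈ ones w :=
                  Finset.orderEmbOfFin_mem _ _ _
                have hmem2 : ((ones w)ᶜ.orderEmbOfFin rfl t : Fin n) ∈ (ones w)ᶜ :=
                  Finset.orderEmbOfFin_mem _ _ _
                rw [show ((ones w).orderEmbOfFin rfl ⟨_, haA⟩ : Fin n)
                  = ((ones w)ᶜ.orderEmbOfFin rfl t : Fin n) from Fin.ext hcontra] at hmem1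
                exact (Finset.mem_compl.1 hmem2) hmem1
              omega
            have hgap : (((ones w).orderEmbOfFin rfl ⟨_, haA⟩ : Fin n) : ℕ)
                + (cnt w i - ((ones w).filter (fun x : Fin n =>
                    (x : ℕ) < (((ones w)ᶜ.orderEmbOfFin rfl t : Fin n) : ℕ))).card)
                ≤ (((ones w).orderEmbOfFin rfl ⟨cnt w i, hmcw⟩ : Fin n) : ℕ) :=
              orderEmb_gap (ones w) _ (cnt w i) ha_le hmcw
            have hqp := hle (cnt w i) hmcw hmc
            rw [Fin.le_def] at hqp
            omega
        have hJsub := hJP.trans hPsub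
        have hcard2 := hJind (cnt w i) hmB
        rw [flag_eq_lt v hmc, Set.inter_eq_self_of_subset_left hJsub] at hcard2
        exact hcard2
      · have hcard2 := hJind (ones v).card le_rfl
        rw [flag_eq_univ v (lt_irrefl _), Set.inter_univ] at hcard2
        omega
    · rw [← hIcard]
      apply le_matRk M hIind
      rintro x ⟨t, ht, rfl⟩
      have ht' : (t : ℕ) < cnt w i := ht
      refine ⟨(ones w).orderEmbOfFin rfl (Fin.cast hcard.symm t), ?_, ?_⟩
      · show (((ones w).orderEmbOfFin rfl (Fin.cast hcard.symm t) : Fin n) : ℕ) < i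
        rw [orderEmb_lt_iff]
        simpa [cnt] using ht'
      · rw [hσap, hfA]
        congr 1
  refine ⟨σ, ?_⟩
  funext i
  have h1 := hrank (i : ℕ) (le_of_lt i.is_lt)
  have h2 := hrank ((i : ℕ) + 1) i.is_lt
  have h3 := cnt_succ w (i : ℕ) i.is_lt
  by_cases hw : w i = true
  · rw [hw]
    have h4 : cnt w ((i : ℕ) + 1) = cnt w (i : ℕ) + 1 := by
      rw [h3, if_pos (by rw [Fin.eta]; exact hw)]
    apply (lam_iff M σ i).2
    rw [h1, h2, h4]
    omega
  · have hwf : w i = false := by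
      cases hb : w i
      · rfl
      · exact absurd hb hw
    have h4 : cnt w ((i : ℕ) + 1) = cnt w (i : ℕ) := by
      rw [h3, if_neg (by rw [Fin.eta]; exact hw), add_zero]
    have h5 : ¬ (lam M σ i = true) := by
      intro hc
      have hlt := (lam_iff M σ i).1 hc
      rw [h1, h2, h4] at hlt
      omega
    rw [hwf]
    cases hb : lam M σ i
    · rfl
    · exact absurd hb h5

/-! ### the binary weight and order facts -/

lemma ones_inj {u u' : Fin n → Bool} (h : ones u = ones u') : u = u' := by
  funext i
  have hi := Finset.ext_iff.1 h i
  simp only [mem_ones] at hi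
  cases hu : u i
  · cases hu' : u' i
    · rfl
    · exact absurd (hi.2 hu') (by simp [hu])
  · exact (hi.1 hu).symm

def bval (u : Fin n → Bool) : ℕ := ∑ x ∈ ones u, 2 ^ (x : ℕ)

lemma bval_injective : Function.Injective (bval (n := n)) := by
  intro u u' h
  apply ones_inj
  have himg : ∀ s : Finset (Fin n), ∑ i ∈ s.image (fun x : Fin n => (x : ℕ)), 2 ^ i
      = ∑ x ∈ s, 2 ^ (x : ℕ) := by
    intro s
    exact Finset.sum_image (fun x _ y _ hxy => Fin.val_injective hxy)
  have h2 : (ones u).image (fun x : Fin n => (x : ℕ))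
      = (ones u').image (fun x : Fin n => (x : ℕ)) := by
    apply Finset.geomSum_injective (le_refl 2)
    simp only []
    rw [himg, himg]
    exact h
  have h3 := Finset.image_injective (f := fun x : Fin n => (x : ℕ)) Fin.val_injective
  exact h3 h2

lemma sum_ones_eq (u : Fin n → Bool) :
    bval u = ∑ t : Fin (ones u).card, 2 ^ (((ones u).orderEmbOfFin rfl t : Fin n) : ℕ) := by
  rw [bval]
  symm
  apply Finset.sum_bij (i := fun (t : Fin (ones u).card) _ => ((ones u).orderEmbOfFin rfl t : Fin n))
  · intro t _
    exact Finset.orderEmbOfFin_mem _ _ _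
  · intro t1 _ t2 _ h
    exact ((ones u).orderEmbOfFin rfl).injective h
  · intro x hx
    obtain ⟨t, ht⟩ := mem_orderEmb_range hx
    exact ⟨t, Finset.mem_univ t, ht⟩
  · intro t _
    rfl

lemma bval_mono (w v : Fin n → Bool) (hcard : (ones w).card = (ones v).card)
    (hle : ∀ (k : ℕ) (hw : k < (ones w).card) (hv : k < (ones v).card),
      (ones w).orderEmbOfFin rfl ⟨k, hw⟩ ≤ (ones v).orderEmbOfFin rfl ⟨k, hv⟩) :
    bval w ≤ bval v := by
  rw [sum_ones_eq w, sum_ones_eq v]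
  calc ∑ t : Fin (ones w).card, 2 ^ (((ones w).orderEmbOfFin rfl t : Fin n) : ℕ)
      ≤ ∑ t : Fin (ones w).card,
          2 ^ (((ones v).orderEmbOfFin rfl (Fin.cast hcard t) : Fin n) : ℕ) := by
        apply Finset.sum_le_sum
        intro t _
        apply Nat.pow_le_pow_right (by norm_num)
        have h := hle (t : ℕ) t.is_lt (hcard ▸ t.is_lt)
        rw [Fin.le_def] at h
        exact h
    _ = ∑ t : Fin (ones v).card, 2 ^ (((ones v).orderEmbOfFin rfl t : Fin n) : ℕ) := by
        apply Fintype.sum_equiv (finCongr hcard)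
        intro t
        rfl

lemma wordLE_refl (u : Fin n → Bool) : wordLE u u :=
  ⟨rfl, fun _ _ _ => le_rfl⟩

end FreedomAux

/-- For `n ≥ r ≥ 0`, let `C` be the square matrix over `ℚ` indexed by
`W(n,r)` whose `(w,v)` entry is `c(w,v) = #{ σ ∈ S_n : λ_{M_v}(σ) = w }`, where `M_v`
is the freedom matroid of the word `v`.  Then `c(w,v) ≠ 0` iff `w ≤ v` in `W(n,r)`,
and the matrix `C` is invertible. -/
theorem freedom_section_matrix_invertible {n r : ℕ} (hrn : r ≤ n)
    (Mfam : (Fin n → Bool) → Matroid (Fin n))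
    (hE : ∀ w, (Mfam w).E = Set.univ)
    (hInd : ∀ w, ∀ I : Set (Fin n),
      (Mfam w).Indep I ↔ ∀ i ≤ (ones w).card, (I ∩ flagOfWord w i).ncard ≤ i)
    (C : Matrix {w : Fin n → Bool // (ones w).card = r}
               {w : Fin n → Bool // (ones w).card = r} ℚ)
    (hC : ∀ w v, C w v =
      ({σ : Equiv.Perm (Fin n) | lam (Mfam v.1) σ = w.1}.ncard : ℚ)) :
    (∀ w v, C w v ≠ 0 ↔ wordLE w.1 v.1) ∧ IsUnit C.det := by
  classical
  have hpart1 : ∀ (w v : {w : Fin n → Bool // (ones w).card = r}),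
      C w v ≠ 0 ↔ wordLE w.1 v.1 := by
    intro w v
    rw [hC w v]
    have hfin : ({σ : Equiv.Perm (Fin n) | lam (Mfam v.1) σ = w.1}).Finite := Set.toFinite _
    rw [Ne, Nat.cast_eq_zero]
    constructor
    · intro hne
      obtain ⟨σ, hσ⟩ := Set.nonempty_of_ncard_ne_zero hne
      refine ⟨by rw [w.2, v.2], ?_⟩
      intro k hkw hkv
      exact FreedomAux.lam_forward v.1 w.1 (Mfam v.1) (hInd v.1) σ hσ k hkw hkv
    · rintro ⟨hcard, hle⟩
      obtain ⟨σ, hσ⟩ := FreedomAux.lam_backward v.1 w.1 (Mfam v.1) (hInd v.1) hcard hle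
      intro h0
      rw [Set.ncard_eq_zero hfin] at h0
      have : σ ∈ ({σ : Equiv.Perm (Fin n) | lam (Mfam v.1) σ = w.1}) := hσ
      rw [h0] at this
      exact Set.notMem_empty σ this
  refine ⟨hpart1, ?_⟩
  have hbinj : Function.Injective
      (fun w : {w : Fin n → Bool // (ones w).card = r} => FreedomAux.bval w.1) := by
    intro x y hxy
    exact Subtype.ext (FreedomAux.bval_injective hxy)
  have htri : C.BlockTriangular
      (fun w : {w : Fin n → Bool // (ones w).card = r} => FreedomAux.bval w.1) := by
    intro x y hxy
    by_contra h0
    have hle := (hpart1 x y).1 h0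
    have hmono := FreedomAux.bval_mono x.1 y.1 hle.1 hle.2
    simp only at hxy
    omega
  rw [htri.det, isUnit_iff_ne_zero, Finset.prod_ne_zero_iff]
  intro a ha
  obtain ⟨x, -, hx⟩ := Finset.mem_image.1 ha
  haveI : Unique {i : {w : Fin n → Bool // (ones w).card = r} // FreedomAux.bval i.1 = a} :=
    ⟨⟨⟨x, hx⟩⟩, by rintro ⟨y, hy⟩; exact Subtype.ext (hbinj (hy.trans hx.symm))⟩
  rw [Matrix.det_unique]
  have hdef : (default : {i : {w : Fin n → Bool // (ones w).card = r} //
      FreedomAux.bval i.1 = a}) = ⟨x, hx⟩ := (Unique.eq_default (⟨x, hx⟩ : {i : {w : Fin n → Bool // (ones w).card = r} //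
        FreedomAux.bval i.1 = a})).symm
  rw [hdef]
  have hentry : (C.toSquareBlock (fun w => FreedomAux.bval w.1) a) ⟨x, hx⟩ ⟨x, hx⟩ = C x x := rfl
  rw [hentry]
  exact (hpart1 x x).2 (FreedomAux.wordLE_refl x.1)
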